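/- If a scoring play game G has G^L ≠ ∅, and P = {.|a|b} with a > 0 and b < 0 chosen so that |b| exceeds the absolute value of every score appearing in the game tree of G, then the Left final score of G +_ℓ P is negative, so G +_ℓ P does not have the same outcome as P (whose Left final score is a > 0). -/
import Mathlib


inductive SGame : Type where
  | mk (left right : List SGame) (score : ℝ)

namespace SGame

def leftOpts : SGame → List SGame | mk L _ _ => L
def rightOpts : SGame → List SGame | mk _ R _ => R
def score : SGame → ℝ | mk _ _ s => s

mutual
  /-- Optimal final score when Left moves first. -/
  def leftScore : SGame → ℝ
    | mk [] _ s => s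
    | mk (g :: L) _ _ => maxRight g L
  termination_by G => sizeOf G
  decreasing_by all_goals (simp; try omega)
  def maxRight : SGame → List SGame → ℝ
    | g, [] => rightScore g
    | g, h :: t => max (rightScore g) (maxRight h t)
  termination_by g l => 1 + sizeOf g + sizeOf l
  decreasing_by all_goals (simp; try omega)
  /-- Optimal final score when Right moves first. -/
  def rightScore : SGame → ℝ
    | mk _ [] s => s
    | mk _ (g :: R) _ => minLeft g R
  termination_by G => sizeOf G
  decreasing_by all_goals (simp; try omega)
  def minLeft : SGame → List SGame → ℝ
    | g, [] => leftScore g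
    | g, h :: t => min (leftScore g) (minLeft h t)
  termination_by g l => 1 + sizeOf g + sizeOf l
  decreasing_by all_goals (simp; try omega)
end

/-- Long-rule disjunctive sum. -/
def sum : SGame → SGame → SGame
  | mk L1 R1 s1, mk L2 R2 s2 =>
    mk ((L1.attach.map fun g => sum g.1 (mk L2 R2 s2)) ++
        (L2.attach.map fun h => sum (mk L1 R1 s1) h.1))
       ((R1.attach.map fun g => sum g.1 (mk L2 R2 s2)) ++
        (R2.attach.map fun h => sum (mk L1 R1 s1) h.1))
       (s1 + s2)
termination_by G H => sizeOf G + sizeOf H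
decreasing_by
  all_goals simp
  · have := List.sizeOf_lt_of_mem g.2; omega
  · have := List.sizeOf_lt_of_mem h.2; omega
  · have := List.sizeOf_lt_of_mem g.2; omega
  · have := List.sizeOf_lt_of_mem h.2; omega

end SGame

namespace SGame

/-- The game `{.|0|.}`. -/
def zero : SGame := mk [] [] 0

/-- Negation: `-G = {-G^R | -G^S | -G^L}`. -/
def neg : SGame → SGame
  | mk L R s =>
    mk (R.attach.map fun g => neg g.1) (L.attach.map fun g => neg g.1) (-s)
termination_by G => sizeOf G
decreasing_by
  all_goals (have := List.sizeOf_lt_of_mem g.2; simp; omega)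

/-- Identity of game trees (options regarded as sets). -/
def Ident : SGame → SGame → Prop
  | mk L1 R1 s1, mk L2 R2 s2 =>
    s1 = s2 ∧
    (∀ g ∈ L1.attach, ∃ h ∈ L2.attach, Ident g.1 h.1) ∧
    (∀ h ∈ L2.attach, ∃ g ∈ L1.attach, Ident g.1 h.1) ∧
    (∀ g ∈ R1.attach, ∃ h ∈ R2.attach, Ident g.1 h.1) ∧
    (∀ h ∈ R2.attach, ∃ g ∈ R1.attach, Ident g.1 h.1)
termination_by G H => sizeOf G + sizeOf H
decreasing_by
  all_goals
    (have := List.sizeOf_lt_of_mem g.2; have := List.sizeOf_lt_of_mem h.2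
     simp; omega)

inductive Outcome : Type where
  | L | R | N | P | T
deriving DecidableEq

/-- The outcome class of a game, determined by the signs of its final scores. -/
noncomputable def outcome (G : SGame) : Outcome :=
  if 0 < G.leftScore then
    (if 0 < G.rightScore then .L else if G.rightScore = 0 then .L else .N)
  else if G.leftScore = 0 then
    (if 0 < G.rightScore then .L else if G.rightScore = 0 then .T else .R)
  else
    (if 0 < G.rightScore then .P else .R)

/-- `G ≥ H`. -/
def Ge (G H : SGame) : Prop :=
  ∀ X : SGame,
    (0 ≤ (H.sum X).leftScore → 0 ≤ (G.sum X).leftScore) ∧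
    (0 ≤ (H.sum X).rightScore → 0 ≤ (G.sum X).rightScore) ∧
    (0 < (H.sum X).leftScore → 0 < (G.sum X).leftScore) ∧
    (0 < (H.sum X).rightScore → 0 < (G.sum X).rightScore)

/-- `G ≤ H`. -/
def Le (G H : SGame) : Prop :=
  ∀ X : SGame,
    ((H.sum X).leftScore ≤ 0 → (G.sum X).leftScore ≤ 0) ∧
    ((H.sum X).rightScore ≤ 0 → (G.sum X).rightScore ≤ 0) ∧
    ((H.sum X).leftScore < 0 → (G.sum X).leftScore < 0) ∧
    ((H.sum X).rightScore < 0 → (G.sum X).rightScore < 0)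

/-- Game equality: same outcome in every disjunctive-sum context. -/
def gameEq (G H : SGame) : Prop :=
  ∀ X : SGame, (G.sum X).outcome = (H.sum X).outcome

end SGame

namespace SGame

/-- Every score in the game tree of `G` satisfies `p`. -/
def AllScores (p : ℝ → Prop) : SGame → Prop
  | mk L R s =>
    p s ∧ (∀ g ∈ L.attach, AllScores p g.1) ∧ (∀ g ∈ R.attach, AllScores p g.1)
termination_by G => sizeOf G
decreasing_by all_goals (have := List.sizeOf_lt_of_mem g.2; simp; omega)

/-- `G ≡ H`: identical underlying game trees, with equal scores at all
termination vertices (vertices at which at least one player has no option,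
i.e. where the play of some disjunctive sum can end). -/
def Equiv : SGame → SGame → Prop
  | mk L1 R1 s1, mk L2 R2 s2 =>
    ((L1 = [] ∨ R1 = []) → s1 = s2) ∧
    (∀ g ∈ L1.attach, ∃ h ∈ L2.attach, Equiv g.1 h.1) ∧
    (∀ h ∈ L2.attach, ∃ g ∈ L1.attach, Equiv g.1 h.1) ∧
    (∀ g ∈ R1.attach, ∃ h ∈ R2.attach, Equiv g.1 h.1) ∧
    (∀ h ∈ R2.attach, ∃ g ∈ R1.attach, Equiv g.1 h.1)
termination_by G H => sizeOf G + sizeOf H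
decreasing_by
  all_goals
    (have := List.sizeOf_lt_of_mem g.2; have := List.sizeOf_lt_of_mem h.2
     simp; omega)

/-- `G` is in canonical form: hereditarily, no dominated and no reversible options. -/
def Canonical : SGame → Prop
  | mk L R s =>
    (∀ A ∈ L, ∀ B ∈ L, A ≠ B → ¬ Ge A B) ∧
    (∀ D ∈ R, ∀ E ∈ R, D ≠ E → ¬ Le D E) ∧
    (∀ A ∈ L, ∀ Ar ∈ A.rightOpts, ¬ Le Ar (mk L R s)) ∧
    (∀ D ∈ R, ∀ Dl ∈ D.leftOpts, ¬ Ge Dl (mk L R s)) ∧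
    (∀ g ∈ L.attach, Canonical g.1) ∧ (∀ g ∈ R.attach, Canonical g.1)
termination_by G => sizeOf G
decreasing_by all_goals (have := List.sizeOf_lt_of_mem g.2; simp; omega)

/-- One reduction step: removing a dominated option or bypassing a reversible
option, at the root or in some subposition. -/
inductive Step : SGame → SGame → Prop where
  | domL {L1 L2 : List SGame} {R : List SGame} {s : ℝ} {B : SGame} (A : SGame)
      (hA : A ∈ L1 ++ L2) (h : Ge A B) :
      Step (mk (L1 ++ B :: L2) R s) (mk (L1 ++ L2) R s)
  | domR {R1 R2 : List SGame} {L : List SGame} {s : ℝ} {E : SGame} (D : SGame)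
      (hD : D ∈ R1 ++ R2) (h : Le D E) :
      Step (mk L (R1 ++ E :: R2) s) (mk L (R1 ++ R2) s)
  | revL {L1 L2 : List SGame} {R : List SGame} {s : ℝ} {A Ar : SGame}
      (hAr : Ar ∈ A.rightOpts) (h : Le Ar (mk (L1 ++ A :: L2) R s)) :
      Step (mk (L1 ++ A :: L2) R s) (mk (L1 ++ Ar.leftOpts ++ L2) R s)
  | revR {R1 R2 : List SGame} {L : List SGame} {s : ℝ} {D Dl : SGame}
      (hDl : Dl ∈ D.leftOpts) (h : Ge Dl (mk L (R1 ++ D :: R2) s)) :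
      Step (mk L (R1 ++ D :: R2) s) (mk L (R1 ++ Dl.rightOpts ++ R2) s)
  | congL {g g' : SGame} {L1 L2 R : List SGame} {s : ℝ} (h : Step g g') :
      Step (mk (L1 ++ g :: L2) R s) (mk (L1 ++ g' :: L2) R s)
  | congR {g g' : SGame} {L R1 R2 : List SGame} {s : ℝ} (h : Step g g') :
      Step (mk L (R1 ++ g :: R2) s) (mk L (R1 ++ g' :: R2) s)

end SGame

namespace SGame

theorem leftScore_cons (g : SGame) (l R : List SGame) (s : ℝ) :
    leftScore (mk (g::l) R s) = maxRight g l := by rw [leftScore]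

theorem rightScore_cons (g : SGame) (l L : List SGame) (s : ℝ) :
    rightScore (mk L (g::l) s) = minLeft g l := by rw [rightScore]

theorem leftScore_nil (R : List SGame) (s : ℝ) : leftScore (mk [] R s) = s := by rw [leftScore]
theorem rightScore_nil (L : List SGame) (s : ℝ) : rightScore (mk L [] s) = s := by rw [rightScore]

theorem maxRight_lt {c : ℝ} : ∀ (l : List SGame) (g : SGame),
    (∀ x ∈ g :: l, rightScore x < c) → maxRight g l < c := by
  intro l
  induction l with
  | nil => intro g h; rw [maxRight]; exact h g (by simp)
  | cons h t ih =>
    intro g hh; rw [maxRight]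
    refine max_lt (hh g (by simp)) (ih h ?_)
    intro x hx; exact hh x (by simp at hx ⊢; tauto)

theorem minLeft_le : ∀ (l : List SGame) (g x : SGame),
    x ∈ g :: l → minLeft g l ≤ leftScore x := by
  intro l
  induction l with
  | nil => intro g x h; simp at h; subst h; rw [minLeft]
  | cons h t ih =>
    intro g x hx; rw [minLeft]
    simp at hx
    rcases hx with rfl | hx
    · exact min_le_left _ _
    · exact le_trans (min_le_right _ _) (ih h x (by simp [hx]))

theorem allScores_iff (L R : List SGame) (s : ℝ) (p : ℝ → Prop) :
    AllScores p (mk L R s) ↔ (p s ∧ (∀ g ∈ L, AllScores p g) ∧ (∀ g ∈ R, AllScores p g)) := by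
  rw [AllScores]; simp

theorem scores_neg : ∀ (n : ℕ) (G : SGame), sizeOf G ≤ n →
    AllScores (fun t => t < 0) G → leftScore G < 0 ∧ rightScore G < 0 := by
  intro n
  induction n with
  | zero => intro G h; cases G with | mk L R s => simp at h
  | succ n ih =>
    intro G hn hG
    cases G with
    | mk L R s =>
      rw [allScores_iff] at hG
      obtain ⟨hs, hL, hR⟩ := hG
      have key : ∀ g ∈ L ++ R, leftScore g < 0 ∧ rightScore g < 0 := by
        intro g hg
        have hsz : sizeOf g < sizeOf (mk L R s) := by
          simp at hg
          rcases hg with hg | hg <;>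
            (have := List.sizeOf_lt_of_mem hg; simp; omega)
        refine ih g (by omega) ?_
        simp at hg; rcases hg with hg | hg
        · exact hL g hg
        · exact hR g hg
      constructor
      · cases L with
        | nil => rw [leftScore_nil]; exact hs
        | cons g l =>
          rw [leftScore_cons]
          exact maxRight_lt l g (fun x hx => (key x (by simp at hx ⊢; tauto)).2
            )
      · cases R with
        | nil => rw [rightScore_nil]; exact hs
        | cons g l =>
          rw [rightScore_cons]
          have hm := minLeft_le l g g (by simp)
          have := (key g (by simp)).1
          linarith

theorem sum_B (Lg Rg : List SGame) (sg b : ℝ) :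
    sum (mk Lg Rg sg) (mk [] [] b) =
      mk (Lg.attach.map fun g => sum g.1 (mk [] [] b))
         (Rg.attach.map fun g => sum g.1 (mk [] [] b)) (sg + b) := by
  rw [sum]; simp

theorem sum_B_neg {b : ℝ} (hb : b < 0) : ∀ (n : ℕ) (G : SGame), sizeOf G ≤ n →
    AllScores (fun t => |t| < |b|) G →
    AllScores (fun t => t < 0) (G.sum (mk [] [] b)) := by
  intro n
  induction n with
  | zero => intro G h; cases G with | mk L R s => simp at h
  | succ n ih =>
    intro G hn hG
    cases G with
    | mk Lg Rg sg =>
      rw [allScores_iff] at hG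
      obtain ⟨hs, hL, hR⟩ := hG
      rw [sum_B, allScores_iff]
      refine ⟨?_, ?_, ?_⟩
      · have h1 : sg ≤ |sg| := le_abs_self sg
        have h2 : |b| = -b := abs_of_neg hb
        show sg + b < 0
        have h3 : |sg| < |b| := hs
        linarith
      all_goals
        intro g hg
        simp only [List.mem_map, List.mem_attach, true_and] at hg
        obtain ⟨x, hx⟩ := hg
        subst hx
        have hsz : sizeOf x.1 < sizeOf (mk Lg Rg sg) := by
          have := List.sizeOf_lt_of_mem x.2; simp; omega
        exact ih x.1 (by omega) (by first | exact hL x.1 x.2 | exact hR x.1 x.2)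

end SGame

namespace SGame

theorem sum_P (L R : List SGame) (s a b : ℝ) :
    sum (mk L R s) (mk [] [mk [] [] b] a) =
      mk (L.attach.map fun g => sum g.1 (mk [] [mk [] [] b] a))
         ((R.attach.map fun g => sum g.1 (mk [] [mk [] [] b] a)) ++
           [sum (mk L R s) (mk [] [] b)])
         (s + a) := by
  rw [sum]; simp

theorem rightScore_sum_P_neg (b a : ℝ) (hb : b < 0) (g : SGame)
    (hg : AllScores (fun t => |t| < |b|) g) :
    rightScore (g.sum (mk [] [mk [] [] b] a)) < 0 := by
  obtain ⟨Lg, Rg, sg⟩ := g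
  rw [sum_P]
  have hmem : sum (mk Lg Rg sg) (mk [] [] b) ∈
      (Rg.attach.map fun g => sum g.1 (mk [] [mk [] [] b] a)) ++
        [sum (mk Lg Rg sg) (mk [] [] b)] := by simp
  obtain ⟨r, rs, hr⟩ : ∃ r rs,
      (Rg.attach.map fun g => sum g.1 (mk [] [mk [] [] b] a)) ++
        [sum (mk Lg Rg sg) (mk [] [] b)] = r :: rs := by
    cases h : (Rg.attach.map fun g => sum g.1 (mk [] [mk [] [] b] a)) ++
        [sum (mk Lg Rg sg) (mk [] [] b)] with
    | nil => simp at h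
    | cons r rs => exact ⟨r, rs, rfl⟩
  rw [hr] at hmem ⊢
  rw [rightScore_cons]
  have h1 := minLeft_le rs r _ hmem
  have h2 : leftScore (sum (mk Lg Rg sg) (mk [] [] b)) < 0 :=
    (scores_neg (sizeOf (sum (mk Lg Rg sg) (mk [] [] b))) _ le_rfl
      (sum_B_neg hb (sizeOf (mk Lg Rg sg)) _ le_rfl hg)).1
  linarith

end SGame

/-- If `G` has a Left option and `P = {.|a|b}` with `a > 0`, `b < 0` and `|b|`
larger than the absolute value of every score in the game tree of `G`, then the
Left final score of `G +ℓ P` is negative, so `G +ℓ P` and `P` have different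
outcomes. -/
theorem distinguishing_game (L R : List SGame) (s a b : ℝ)
    (hL : L ≠ []) (ha : 0 < a) (hb : b < 0)
    (hbig : SGame.AllScores (fun t => |t| < |b|) (SGame.mk L R s)) :
    ((SGame.mk L R s).sum (SGame.mk [] [SGame.mk [] [] b] a)).leftScore < 0 ∧
    ((SGame.mk L R s).sum (SGame.mk [] [SGame.mk [] [] b] a)).outcome ≠
      (SGame.mk [] [SGame.mk [] [] b] a).outcome := by
  open SGame in
  have hbigL : ∀ g ∈ L, SGame.AllScores (fun t => |t| < |b|) g :=
    ((SGame.allScores_iff L R s _).mp hbig).2.1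
  have key : ((SGame.mk L R s).sum (SGame.mk [] [SGame.mk [] [] b] a)).leftScore < 0 := by
    rw [SGame.sum_P]
    obtain ⟨x, xs, hx⟩ : ∃ x xs,
        (L.attach.map fun g => SGame.sum g.1 (SGame.mk [] [SGame.mk [] [] b] a)) = x :: xs := by
      cases h : (L.attach.map fun g => SGame.sum g.1 (SGame.mk [] [SGame.mk [] [] b] a)) with
      | nil => simp at h; exact absurd h hL
      | cons x xs => exact ⟨x, xs, rfl⟩
    rw [hx, SGame.leftScore_cons]
    refine SGame.maxRight_lt xs x ?_
    intro y hy
    rw [← hx] at hy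
    simp only [List.mem_map, List.mem_attach, true_and] at hy
    obtain ⟨g, hg⟩ := hy
    subst hg
    exact SGame.rightScore_sum_P_neg b a hb g.1 (hbigL g.1 g.2)
  refine ⟨key, ?_⟩
  have hlP : (SGame.mk [] [SGame.mk [] [] b] a).leftScore = a := SGame.leftScore_nil _ _
  have hrP : (SGame.mk [] [SGame.mk [] [] b] a).rightScore = b := by
    rw [SGame.rightScore_cons, SGame.minLeft, SGame.leftScore_nil]
  have hoP : (SGame.mk [] [SGame.mk [] [] b] a).outcome = .N := by
    rw [SGame.outcome, hlP, hrP, if_pos ha, if_neg (by linarith), if_neg (by linarith)]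
  rw [hoP, SGame.outcome, if_neg (by linarith), if_neg (by linarith)]
  split_ifs <;> simp
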